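/- If C is a closed convex subset of hyperbolic n-space H^n and x is a point at distance d from C, then the nearest-point projection onto C contracts the local metric at x by at least a factor cosh(d) (in particular at least e^d/2). -/

import Mathlib

open Set

/-! The upper half-space model of hyperbolic `(m+1)`-space: points are pairs
`(p, t)` with `p ∈ ℝ^m` and `t > 0`, with hyperbolic distance
`d(x, y) = arcosh (1 + (|Δp|² + (Δt)²) / (2 t t'))`. -/

/-- Inverse hyperbolic cosine. -/
noncomputable def arcosh (x : ℝ) : ℝ := Real.log (x + Real.sqrt (x ^ 2 - 1))

/-- The upper half-space model of hyperbolic space. -/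
def UHS (m : ℕ) : Type := {x : EuclideanSpace ℝ (Fin m) × ℝ // 0 < x.2}

noncomputable instance (m : ℕ) : TopologicalSpace (UHS m) :=
  instTopologicalSpaceSubtype

/-- Hyperbolic distance in the upper half-space model. -/
noncomputable def hdist {m : ℕ} (x y : UHS m) : ℝ :=
  arcosh (1 + (dist x.1.1 y.1.1 ^ 2 + (x.1.2 - y.1.2) ^ 2) / (2 * x.1.2 * y.1.2))

/-- `γ` is a unit-speed hyperbolic geodesic segment on `[a, b]`. -/
def IsGeodesicSeg {m : ℕ} (γ : ℝ → UHS m) (a b : ℝ) : Prop :=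
  ∀ s ∈ Icc a b, ∀ t ∈ Icc a b, hdist (γ s) (γ t) = |s - t|

/-- A subset of hyperbolic space is convex if it contains every geodesic segment
between any two of its points. -/
def HConvex {m : ℕ} (C : Set (UHS m)) : Prop :=
  ∀ x ∈ C, ∀ y ∈ C, ∀ (γ : ℝ → UHS m) (a b : ℝ), a ≤ b → IsGeodesicSeg γ a b →
    γ a = x → γ b = y → ∀ t ∈ Icc a b, γ t ∈ C

/-- The hyperbolic length of a path, as the supremum of sums of hyperbolic
distances over partitions. -/
noncomputable def pathLen {m : ℕ} (γ : ℝ → UHS m) (a b : ℝ) : ℝ :=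
  sSup {r | ∃ l : List ℝ, l.Pairwise (· ≤ ·) ∧ (∀ t ∈ l, t ∈ Icc a b) ∧
    ((l.zip l.tail).map fun p => hdist (γ p.1) (γ p.2)).sum = r}

/-- The intrinsic (induced path) metric of a subset `S`: the infimum of lengths
of continuous paths in `S` joining the two points. -/
noncomputable def intrinsicDist {m : ℕ} (S : Set (UHS m)) (x y : UHS m) : ℝ :=
  sInf {r | ∃ γ : ℝ → UHS m, Continuous γ ∧ (∀ t ∈ Icc (0 : ℝ) 1, γ t ∈ S) ∧
    γ 0 = x ∧ γ 1 = y ∧ pathLen γ 0 1 = r}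

/-- Horospheres in the upper half-space model: horizontal hyperplanes (centered
at ∞) or Euclidean spheres tangent to the boundary. -/
def IsHorosphere {m : ℕ} (S : Set (UHS m)) : Prop :=
  (∃ c : ℝ, 0 < c ∧ S = {z : UHS m | z.1.2 = c}) ∨
  (∃ (q : EuclideanSpace ℝ (Fin m)) (r : ℝ), 0 < r ∧
    S = {z : UHS m | dist z.1.1 q ^ 2 + (z.1.2 - r) ^ 2 = r ^ 2})

/-- A (closed) horoball together with its bounding horosphere. -/
def IsHoroballPair {m : ℕ} (B S : Set (UHS m)) : Prop :=
  (∃ c : ℝ, 0 < c ∧ B = {z : UHS m | c ≤ z.1.2} ∧ S = {z : UHS m | z.1.2 = c}) ∨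
  (∃ (q : EuclideanSpace ℝ (Fin m)) (r : ℝ), 0 < r ∧
    B = {z : UHS m | dist z.1.1 q ^ 2 + (z.1.2 - r) ^ 2 ≤ r ^ 2} ∧
    S = {z : UHS m | dist z.1.1 q ^ 2 + (z.1.2 - r) ^ 2 = r ^ 2})

/-- A (closed) horoball together with its interior, the open horoball. -/
def IsHoroballOpenPair {m : ℕ} (B Bo : Set (UHS m)) : Prop :=
  (∃ c : ℝ, 0 < c ∧ B = {z : UHS m | c ≤ z.1.2} ∧ Bo = {z : UHS m | c < z.1.2}) ∨
  (∃ (q : EuclideanSpace ℝ (Fin m)) (r : ℝ), 0 < r ∧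
    B = {z : UHS m | dist z.1.1 q ^ 2 + (z.1.2 - r) ^ 2 ≤ r ^ 2} ∧
    Bo = {z : UHS m | dist z.1.1 q ^ 2 + (z.1.2 - r) ^ 2 < r ^ 2})

namespace ProjAux

/-! ### arcosh lemmas -/

lemma cosh_arcosh {x : ℝ} (hx : 1 ≤ x) : Real.cosh (arcosh x) = x := by
  have h0 : (0:ℝ) ≤ x ^ 2 - 1 := by nlinarith
  have hs : Real.sqrt (x ^ 2 - 1) ^ 2 = x ^ 2 - 1 := Real.sq_sqrt h0
  have hsn : 0 ≤ Real.sqrt (x ^ 2 - 1) := Real.sqrt_nonneg _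
  have hpos : 0 < x + Real.sqrt (x ^ 2 - 1) := by nlinarith
  have hinv : (x + Real.sqrt (x ^ 2 - 1))⁻¹ = x - Real.sqrt (x ^ 2 - 1) :=
    inv_eq_of_mul_eq_one_right (by nlinarith)
  rw [arcosh, Real.cosh_eq, Real.exp_log hpos, Real.exp_neg, Real.exp_log hpos, hinv]
  ring

lemma arcosh_cosh {t : ℝ} (ht : 0 ≤ t) : arcosh (Real.cosh t) = t := by
  have h1 : Real.cosh t ^ 2 - 1 = Real.sinh t ^ 2 := by
    have := Real.cosh_sq_sub_sinh_sq t; linarith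
  rw [arcosh, h1, Real.sqrt_sq (Real.sinh_nonneg_iff.2 ht), Real.cosh_add_sinh, Real.log_exp]

lemma arcosh_nonneg {x : ℝ} (hx : 1 ≤ x) : 0 ≤ arcosh x :=
  Real.log_nonneg (by nlinarith [Real.sqrt_nonneg (x ^ 2 - 1)])

lemma sinh_le_mul_exp {t : ℝ} (ht : 0 ≤ t) : Real.sinh t ≤ t * Real.exp t := by
  have h1 : (-(2*t)) + 1 ≤ Real.exp (-(2*t)) := Real.add_one_le_exp _
  have h2 : Real.exp (-t) * Real.exp (-t) = Real.exp (-(2*t)) := by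
    rw [← Real.exp_add]; ring_nf
  have h3 : Real.exp (-t) = (Real.exp t)⁻¹ := Real.exp_neg t
  have h4 : 0 < Real.exp t := Real.exp_pos t
  have hEi : (Real.exp t)⁻¹ * Real.exp t = 1 := inv_mul_cancel₀ h4.ne'
  have hthis : 1 - 2*t ≤ (Real.exp t)⁻¹ * (Real.exp t)⁻¹ := by rw [h3] at h2; linarith
  have key : (1 - 2*t) * (Real.exp t * Real.exp t) ≤ 1 := by
    calc (1-2*t) * (Real.exp t * Real.exp t)
        ≤ ((Real.exp t)⁻¹ * (Real.exp t)⁻¹) * (Real.exp t * Real.exp t) := by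
          nlinarith [mul_pos h4 h4]
      _ = ((Real.exp t)⁻¹ * Real.exp t) * ((Real.exp t)⁻¹ * Real.exp t) := by ring
      _ = 1 := by rw [hEi]; ring
  have hmul : (Real.exp t - (Real.exp t)⁻¹) * Real.exp t = Real.exp t * Real.exp t - 1 := by
    field_simp
  rw [Real.sinh_eq, h3]
  nlinarith [h4]

lemma cosh_sub_one_le {t : ℝ} (ht : 0 ≤ t) : Real.cosh t - 1 ≤ t^2/2 * Real.exp t := by
  have h := Real.cosh_two_mul (t/2)
  have h2 : Real.cosh (t/2) ^ 2 = 1 + Real.sinh (t/2) ^ 2 := Real.cosh_sq' (t/2)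
  have h3 : Real.sinh (t/2) ≤ t/2 * Real.exp (t/2) := sinh_le_mul_exp (by linarith)
  have h4 : 0 ≤ Real.sinh (t/2) := Real.sinh_nonneg_iff.2 (by linarith)
  have h5 : Real.exp (t/2) * Real.exp (t/2) = Real.exp t := by
    rw [← Real.exp_add]; ring_nf
  have h6 : Real.cosh t = 1 + 2 * Real.sinh (t/2)^2 := by
    have : 2 * (t/2) = t := by ring
    rw [← this, h, h2]; ring
  nlinarith [Real.exp_pos (t/2)]

lemma cosh_sub_one_eq (t : ℝ) : Real.cosh t - 1 = 2 * Real.sinh (t/2)^2 := by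
  have h := Real.cosh_two_mul (t/2)
  have h2 : Real.cosh (t/2) ^ 2 = 1 + Real.sinh (t/2) ^ 2 := Real.cosh_sq' (t/2)
  have : 2 * (t/2) = t := by ring
  rw [← this, h, h2]; ring

/-- First variation: if `c ≤ c cosh s + b sinh s` for all small positive `s`, then `b ≥ 0`. -/
lemma first_variation {c b L : ℝ} (hc : 1 ≤ c) (hL : 0 < L)
    (h : ∀ s ∈ Icc (0:ℝ) L, c ≤ c * Real.cosh s + b * Real.sinh s) : 0 ≤ b := by
  by_contra hb
  push_neg at hb
  have hc0 : 0 < c := by linarith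
  have hbpos : 0 < -b / (6*c) := div_pos (by linarith) (by linarith)
  set s : ℝ := min L (min 1 (-b / (6*c))) with hs
  have hspos : 0 < s := by
    simp only [hs, lt_min_iff]; exact ⟨hL, one_pos, hbpos⟩
  have hsL : s ≤ L := min_le_left _ _
  have hs1 : s ≤ 1 := le_trans (min_le_right _ _) (min_le_left _ _)
  have hsb : s ≤ -b / (6*c) := le_trans (min_le_right _ _) (min_le_right _ _)
  have h1 := h s ⟨le_of_lt hspos, hsL⟩
  have h2 : Real.cosh s - 1 ≤ s^2/2 * Real.exp s := cosh_sub_one_le hspos.le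
  have h3 : s ≤ Real.sinh s := (Real.self_lt_sinh_iff.2 hspos).le
  have h4 : Real.exp s ≤ Real.exp 1 := Real.exp_le_exp.2 hs1
  have h5 : Real.exp 1 < 3 := by
    have := Real.exp_one_lt_d9; linarith
  have h6 : b * Real.sinh s ≤ b * s := by nlinarith
  have h7 : 0 ≤ c * (Real.cosh s - 1) + b * Real.sinh s := by nlinarith
  have h9 : s^2/2 * Real.exp s ≤ 3/2 * s^2 := by nlinarith [Real.exp_pos s, sq_nonneg s]
  have h10 : c * (s^2/2 * Real.exp s) ≤ 3/2 * (c * s^2) := by nlinarith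
  have h8 : c * (Real.cosh s - 1) ≤ c * (s^2/2 * Real.exp s) := by nlinarith
  have h11 : 0 ≤ 3/2*(c*s^2) + b*s := by linarith
  have h12 : s * (6*c) ≤ -b := (le_div_iff₀ (by linarith)).1 hsb
  have h13 : (s*(6*c))*s ≤ (-b)*s := mul_le_mul_of_nonneg_right h12 hspos.le
  nlinarith [mul_pos (mul_pos hc0 hspos) hspos]

/-! ### The Minkowski / hyperboloid model -/

abbrev E (m : ℕ) := ℝ × EuclideanSpace ℝ (Fin m) × ℝ

noncomputable def Bf {m : ℕ} (X Y : E m) : ℝ :=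
  X.1 * Y.1 - (inner ℝ X.2.1 Y.2.1 : ℝ) - X.2.2 * Y.2.2

lemma Bf_comm {m : ℕ} (X Y : E m) : Bf X Y = Bf Y X := by
  simp only [Bf, real_inner_comm]; ring

lemma Bf_add_left {m : ℕ} (X Y Z : E m) : Bf (X + Y) Z = Bf X Z + Bf Y Z := by
  simp only [Bf, Prod.fst_add, Prod.snd_add, inner_add_left]; ring

lemma Bf_smul_left {m : ℕ} (a : ℝ) (X Y : E m) : Bf (a • X) Y = a * Bf X Y := by
  simp only [Bf, Prod.smul_fst, Prod.smul_snd, smul_eq_mul, real_inner_smul_left]; ring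

lemma Bf_add_right {m : ℕ} (X Y Z : E m) : Bf X (Y + Z) = Bf X Y + Bf X Z := by
  rw [Bf_comm, Bf_add_left, Bf_comm Y X, Bf_comm Z X]

lemma Bf_smul_right {m : ℕ} (a : ℝ) (X Y : E m) : Bf X (a • Y) = a * Bf X Y := by
  rw [Bf_comm, Bf_smul_left, Bf_comm Y X]

lemma Bf_sub_left {m : ℕ} (X Y Z : E m) : Bf (X - Y) Z = Bf X Z - Bf Y Z := by
  have : X - Y = X + (-1 : ℝ) • Y := by module
  rw [this, Bf_add_left, Bf_smul_left]; ring

lemma Bf_sub_right {m : ℕ} (X Y Z : E m) : Bf X (Y - Z) = Bf X Y - Bf X Z := by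
  rw [Bf_comm, Bf_sub_left, Bf_comm Y X, Bf_comm Z X]

noncomputable def Phi {m : ℕ} (z : UHS m) : E m :=
  ((‖z.1.1‖ ^ 2 + z.1.2 ^ 2 + 1) / (2 * z.1.2), z.1.2⁻¹ • z.1.1,
    (‖z.1.1‖ ^ 2 + z.1.2 ^ 2 - 1) / (2 * z.1.2))

lemma Bf_Phi_Phi {m : ℕ} (x y : UHS m) :
    Bf (Phi x) (Phi y)
      = 1 + (dist x.1.1 y.1.1 ^ 2 + (x.1.2 - y.1.2) ^ 2) / (2 * x.1.2 * y.1.2) := by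
  obtain ⟨⟨p, t⟩, ht⟩ := x
  obtain ⟨⟨q, u⟩, hu⟩ := y
  have ht' : (0:ℝ) < t := ht
  have hu' : (0:ℝ) < u := hu
  simp only [Bf, Phi]
  have hdq : dist p q ^ 2 = ‖p‖ ^ 2 - 2 * (inner ℝ p q : ℝ) + ‖q‖ ^ 2 := by
    rw [dist_eq_norm, @norm_sub_sq_real]
  have hip : (inner ℝ (t⁻¹ • p) (u⁻¹ • q) : ℝ) = t⁻¹ * u⁻¹ * (inner ℝ p q : ℝ) := by
    rw [real_inner_smul_left, real_inner_smul_right]; ring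
  rw [hip, hdq]
  field_simp
  ring

lemma Bf_Phi_self {m : ℕ} (x : UHS m) : Bf (Phi x) (Phi x) = 1 := by
  rw [Bf_Phi_Phi]; simp

lemma one_le_Bf_Phi {m : ℕ} (x y : UHS m) : 1 ≤ Bf (Phi x) (Phi y) := by
  rw [Bf_Phi_Phi]
  have h1 : 0 ≤ (dist x.1.1 y.1.1 ^ 2 + (x.1.2 - y.1.2) ^ 2) / (2 * x.1.2 * y.1.2) := by
    apply div_nonneg (by positivity)
    have := x.2; have := y.2; positivity
  linarith

lemma cosh_hdist {m : ℕ} (x y : UHS m) : Real.cosh (hdist x y) = Bf (Phi x) (Phi y) := by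
  rw [hdist, ← Bf_Phi_Phi, cosh_arcosh (one_le_Bf_Phi x y)]

lemma hdist_nonneg {m : ℕ} (x y : UHS m) : 0 ≤ hdist x y := by
  rw [hdist, ← Bf_Phi_Phi]
  exact arcosh_nonneg (one_le_Bf_Phi x y)

lemma Phi_fst_sub {m : ℕ} (z : UHS m) : (Phi z).1 - (Phi z).2.2 = z.1.2⁻¹ := by
  have hz : (0:ℝ) < z.1.2 := z.2
  simp only [Phi]
  rw [div_sub_div_same,
    show (‖z.1.1‖ ^ 2 + z.1.2 ^ 2 + 1) - (‖z.1.1‖ ^ 2 + z.1.2 ^ 2 - 1) = 2 by ring,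
    div_eq_iff (by positivity : (2:ℝ) * z.1.2 ≠ 0)]
  field_simp

noncomputable def Psi {m : ℕ} (Z : E m) : UHS m :=
  if h : 0 < Z.1 - Z.2.2 then ⟨((Z.1 - Z.2.2)⁻¹ • Z.2.1, (Z.1 - Z.2.2)⁻¹), inv_pos.2 h⟩
  else ⟨(0, 1), one_pos⟩

lemma Psi_Phi {m : ℕ} (z : UHS m) : Psi (Phi z) = z := by
  have hz : (0:ℝ) < z.1.2 := z.2
  have hpos : 0 < (Phi z).1 - (Phi z).2.2 := by rw [Phi_fst_sub]; positivity
  rw [show Psi (Phi z) = (⟨(((Phi z).1 - (Phi z).2.2)⁻¹ • (Phi z).2.1, ((Phi z).1 - (Phi z).2.2)⁻¹), inv_pos.2 hpos⟩ : UHS m) from dif_pos hpos]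
  apply Subtype.ext
  refine Prod.ext ?_ ?_
  · show (((Phi z).1 - (Phi z).2.2)⁻¹ • (Phi z).2.1) = z.1.1
    rw [Phi_fst_sub, inv_inv]
    show z.1.2 • (z.1.2⁻¹ • z.1.1) = z.1.1
    rw [smul_smul, mul_inv_cancel₀ hz.ne', one_smul]
  · show ((Phi z).1 - (Phi z).2.2)⁻¹ = z.1.2
    rw [Phi_fst_sub, inv_inv]

lemma Phi_Psi {m : ℕ} (Z : E m) (hZ : 0 < Z.1 - Z.2.2) (hB : Bf Z Z = 1) :
    Phi (Psi Z) = Z := by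
  have hne : Z.1 - Z.2.2 ≠ 0 := hZ.ne'
  have hnorm : ‖Z.2.1‖ ^ 2 = Z.1 ^ 2 - Z.2.2 ^ 2 - 1 := by
    have : (inner ℝ Z.2.1 Z.2.1 : ℝ) = ‖Z.2.1‖ ^ 2 := real_inner_self_eq_norm_sq _
    simp only [Bf] at hB
    nlinarith
  rw [show Psi Z = (⟨((Z.1 - Z.2.2)⁻¹ • Z.2.1, (Z.1 - Z.2.2)⁻¹), inv_pos.2 hZ⟩ : UHS m) from dif_pos hZ]
  have ht : ((Z.1 - Z.2.2)⁻¹ : ℝ) > 0 := inv_pos.2 hZ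
  simp only [Phi]
  have hsm : ‖(Z.1 - Z.2.2)⁻¹ • Z.2.1‖ ^ 2 = ((Z.1 - Z.2.2)⁻¹) ^ 2 * ‖Z.2.1‖ ^ 2 := by
    rw [norm_smul, mul_pow, Real.norm_eq_abs, sq_abs]
  refine Prod.ext ?_ (Prod.ext ?_ ?_)
  · show (‖(Z.1 - Z.2.2)⁻¹ • Z.2.1‖ ^ 2 + ((Z.1 - Z.2.2)⁻¹) ^ 2 + 1) / (2 * (Z.1 - Z.2.2)⁻¹) = Z.1
    rw [hsm, hnorm]
    field_simp
    ring
  · show ((Z.1 - Z.2.2)⁻¹)⁻¹ • ((Z.1 - Z.2.2)⁻¹ • Z.2.1) = Z.2.1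
    rw [smul_smul, inv_inv, mul_inv_cancel₀ hne, one_smul]
  · show (‖(Z.1 - Z.2.2)⁻¹ • Z.2.1‖ ^ 2 + ((Z.1 - Z.2.2)⁻¹) ^ 2 - 1) / (2 * (Z.1 - Z.2.2)⁻¹) = Z.2.2
    rw [hsm, hnorm]
    field_simp
    ring

/-! ### Reverse Cauchy-Schwarz machinery -/

set_option maxHeartbeats 1000000 in
lemma Bf_self_nonpos_of_orth {m : ℕ} (Y W : E m) (hY : Bf Y Y = 1) (hO : Bf Y W = 0) :
    Bf W W ≤ 0 := by
  have hYs : (inner ℝ Y.2.1 Y.2.1 : ℝ) = ‖Y.2.1‖ ^ 2 := real_inner_self_eq_norm_sq _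
  have hWs : (inner ℝ W.2.1 W.2.1 : ℝ) = ‖W.2.1‖ ^ 2 := real_inner_self_eq_norm_sq _
  simp only [Bf] at hY hO ⊢
  rw [hYs] at hY
  rw [hWs]
  set i : ℝ := (inner ℝ Y.2.1 W.2.1 : ℝ) with hi
  set a : ℝ := ‖Y.2.1‖ with ha
  set b : ℝ := ‖W.2.1‖ with hb
  set c : ℝ := Y.2.2
  set dd : ℝ := W.2.2
  have hCS : |i| ≤ a * b := abs_real_inner_le_norm _ _
  have hab : 0 ≤ a * b := mul_nonneg (norm_nonneg _) (norm_nonneg _)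
  have h1 : (i + c*dd)^2 ≤ (|i| + |c*dd|)^2 := by
    have h := abs_add_le i (c*dd)
    nlinarith [sq_abs (i + c*dd), abs_nonneg (i + c*dd), abs_nonneg i, abs_nonneg (c*dd)]
  have h2 : (|i| + |c*dd|)^2 ≤ (a*b + |c*dd|)^2 := by
    nlinarith [abs_nonneg (c*dd), abs_nonneg i]
  have h3 : (a*b + |c*dd|)^2 ≤ (a^2 + c^2) * (b^2 + dd^2) := by
    have habs2 : |c*dd| = |c| * |dd| := abs_mul c dd
    nlinarith [sq_nonneg (a*|dd| - b*|c|), abs_nonneg c, abs_nonneg dd, sq_abs c,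
      sq_abs dd, mul_nonneg (abs_nonneg c) (abs_nonneg dd)]
  have key : (i + c*dd)^2 ≤ (a^2 + c^2) * (b^2 + dd^2) := le_trans h1 (le_trans h2 h3)
  have hO' : Y.1 * W.1 = i + c*dd := by linarith
  have hEq : a^2 + c^2 = Y.1^2 - 1 := by nlinarith
  have key2 : (Y.1 * W.1)^2 ≤ (Y.1^2 - 1) * (b^2 + dd^2) := by
    rw [hO', ← hEq]; exact key
  have hS : (0:ℝ) ≤ b^2 + dd^2 := by positivity
  have hY2 : (1:ℝ) ≤ Y.1^2 := by nlinarith [sq_nonneg a, sq_nonneg c]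
  nlinarith [key2, hS, hY2]

set_option maxHeartbeats 1000000 in
lemma Bf_CS {m : ℕ} (Y W₁ W₂ : E m) (hY : Bf Y Y = 1)
    (h1 : Bf Y W₁ = 0) (h2 : Bf Y W₂ = 0) :
    (Bf W₁ W₂) ^ 2 ≤ (Bf W₁ W₁) * (Bf W₂ W₂) := by
  have hq : ∀ lam : ℝ, 0 ≤ (-(Bf W₂ W₂)) * (lam * lam) + (-(2 * Bf W₁ W₂)) * lam
      + (-(Bf W₁ W₁)) := by
    intro lam
    have horth : Bf Y (W₁ + lam • W₂) = 0 := by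
      rw [Bf_add_right, Bf_smul_right, h1, h2]; ring
    have hneg := Bf_self_nonpos_of_orth Y (W₁ + lam • W₂) hY horth
    have hexp : Bf (W₁ + lam • W₂) (W₁ + lam • W₂)
        = Bf W₁ W₁ + 2 * lam * Bf W₁ W₂ + lam ^ 2 * Bf W₂ W₂ := by
      rw [Bf_add_left, Bf_add_right, Bf_add_right, Bf_smul_left, Bf_smul_right,
        Bf_smul_left, Bf_smul_right, Bf_comm W₂ W₁]
      ring
    rw [hexp] at hneg
    nlinarith
  have hd := discrim_le_zero hq
  rw [discrim] at hd
  nlinarith [hd]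

set_option maxHeartbeats 1000000 in
/-- Reverse Cauchy-Schwarz / triangle-type inequality at the form level. -/
lemma Bf_le_of_mid {m : ℕ} (X Y Z : E m) (hX : Bf X X = 1) (hY : Bf Y Y = 1)
    (hZ : Bf Z Z = 1) (sXY sYZ : ℝ) (hsXY : 0 ≤ sXY) (hsYZ : 0 ≤ sYZ)
    (hXY : (Bf X Y) ^ 2 = 1 + sXY ^ 2) (hYZ : (Bf Y Z) ^ 2 = 1 + sYZ ^ 2) :
    Bf X Z ≤ Bf X Y * Bf Y Z + sXY * sYZ := by
  set X' : E m := X - (Bf X Y) • Y with hX'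
  set Z' : E m := Z - (Bf Z Y) • Y with hZ'
  have hoX : Bf Y X' = 0 := by
    rw [hX', Bf_sub_right, Bf_smul_right, hY, Bf_comm Y X]; ring
  have hoZ : Bf Y Z' = 0 := by
    rw [hZ', Bf_sub_right, Bf_smul_right, hY, Bf_comm Y Z]; ring
  have hXX' : Bf X' X' = 1 - (Bf X Y) ^ 2 := by
    rw [hX', Bf_sub_left, Bf_sub_right, Bf_sub_right, Bf_smul_left, Bf_smul_right,
      Bf_smul_left, Bf_smul_right, hX, hY, Bf_comm Y X]
    ring
  have hZZ' : Bf Z' Z' = 1 - (Bf Z Y) ^ 2 := by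
    rw [hZ', Bf_sub_left, Bf_sub_right, Bf_sub_right, Bf_smul_left, Bf_smul_right,
      Bf_smul_left, Bf_smul_right, hZ, hY, Bf_comm Y Z]
    ring
  have hdecomp : Bf X Z = Bf X Y * Bf Z Y + Bf X' Z' := by
    rw [hX', hZ', Bf_sub_left, Bf_sub_right, Bf_sub_right, Bf_smul_left, Bf_smul_right,
      Bf_smul_left, Bf_smul_right, hY, Bf_comm Y Z]
    ring
  have hCS := Bf_CS Y X' Z' hY hoX hoZ
  rw [hXX', hZZ'] at hCS
  have e1 : 1 - (Bf X Y) ^ 2 = -(sXY ^ 2) := by linarith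
  have e2 : 1 - (Bf Z Y) ^ 2 = -(sYZ ^ 2) := by rw [Bf_comm Z Y]; linarith
  rw [e1, e2] at hCS
  have h1 : (Bf X' Z') ^ 2 ≤ (sXY * sYZ) ^ 2 := by nlinarith [hCS]
  have h2 : Bf X' Z' ≤ sXY * sYZ := by
    nlinarith [h1, mul_nonneg hsXY hsYZ, sq_nonneg (Bf X' Z' - sXY * sYZ),
      sq_nonneg (Bf X' Z' + sXY * sYZ)]
  rw [Bf_comm Z Y] at hdecomp
  linarith

lemma neg_le_of_sq_le_sq {x y : ℝ} (h : x ^ 2 ≤ y ^ 2) (hy : 0 ≤ y) : -y ≤ x := by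
  nlinarith [sq_nonneg (x + y)]

set_option maxHeartbeats 1600000 in
/-- The key quadrilateral comparison at the form level. -/
lemma quad {m : ℕ} (P V X Y : E m) (L c c' s s' : ℝ)
    (hPP : Bf P P = 1) (hVV : Bf V V = -1) (hPV : Bf P V = 0)
    (hXX : Bf X X = 1) (hYY : Bf Y Y = 1)
    (hL : 0 ≤ L) (hc1 : 1 ≤ c) (hc1' : 1 ≤ c')
    (hXP : Bf X P = c) (hb : 0 ≤ Bf X V)
    (hYQ : Bf Y P * Real.cosh L + Bf Y V * Real.sinh L = c')
    (he : Bf Y P * Real.sinh L + Bf Y V * Real.cosh L ≤ 0)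
    (hs : 0 ≤ s) (hs' : 0 ≤ s') (hcs : c ^ 2 = 1 + s ^ 2) (hcs' : c' ^ 2 = 1 + s' ^ 2) :
    c * c' * Real.cosh L - s * s' ≤ Bf X Y := by
  set a' : ℝ := Bf Y P with ha'
  set b' : ℝ := Bf Y V with hb'
  set b : ℝ := Bf X V with hbb
  set e' : ℝ := -(a' * Real.sinh L + b' * Real.cosh L) with he'
  have he'0 : 0 ≤ e' := by rw [he']; linarith
  have hch : Real.cosh L ^ 2 - Real.sinh L ^ 2 = 1 := Real.cosh_sq_sub_sinh_sq L
  have hchpos : 1 ≤ Real.cosh L := Real.one_le_cosh L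
  have hsh : 0 ≤ Real.sinh L := Real.sinh_nonneg_iff.2 hL
  -- solve for a', b'
  have ha'eq : a' = c' * Real.cosh L + e' * Real.sinh L := by
    rw [he', ← hYQ]; linear_combination (-a') * hch
  have hb'eq : b' = -(c' * Real.sinh L + e' * Real.cosh L) := by
    rw [he', ← hYQ]; linear_combination (-b') * hch
  have ha'b' : a' ^ 2 - b' ^ 2 = c' ^ 2 - e' ^ 2 := by
    rw [he', ← hYQ]; linear_combination (b' ^ 2 - a' ^ 2) * hch
  -- orthogonal decompositions
  set X' : E m := X - c • P + b • V with hX'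
  set Y' : E m := Y - a' • P + b' • V with hY'
  have hPX : Bf P X = c := by rw [Bf_comm]; exact hXP
  have hVX : Bf V X = b := by rw [Bf_comm]
  have hPY : Bf P Y = a' := by rw [Bf_comm]
  have hVY : Bf V Y = b' := by rw [Bf_comm]
  have hVP : Bf V P = 0 := by rw [Bf_comm]; exact hPV
  have hoX : Bf P X' = 0 := by
    simp only [hX', Bf_add_right, Bf_sub_right, Bf_smul_right, hPX, hPP, hPV]; ring
  have hoY : Bf P Y' = 0 := by
    simp only [hY', Bf_add_right, Bf_sub_right, Bf_smul_right, hPY, hPP, hPV]; ring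
  have hXX' : Bf X' X' = 1 - c ^ 2 + b ^ 2 := by
    simp only [hX', Bf_add_left, Bf_add_right, Bf_sub_left, Bf_sub_right,
      Bf_smul_left, Bf_smul_right, hXX, hPP, hVV, hPV, hXP, hPX, hVX, hVP]
    ring
  have hYY' : Bf Y' Y' = 1 - a' ^ 2 + b' ^ 2 := by
    simp only [hY', Bf_add_left, Bf_add_right, Bf_sub_left, Bf_sub_right,
      Bf_smul_left, Bf_smul_right, hYY, hPP, hVV, hPV, hPY, hVY, hVP]
    ring
  have hdecomp : Bf X' Y' = Bf X Y - c * a' + b * b' := by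
    simp only [hX', hY', Bf_add_left, Bf_add_right, Bf_sub_left, Bf_sub_right,
      Bf_smul_left, Bf_smul_right, hPP, hVV, hPV, hXP, hPX, hVX, hVP, hPY, hVY]
    ring
  have hq1 : Bf X' X' ≤ 0 := Bf_self_nonpos_of_orth P X' hPP hoX
  have hq2 : Bf Y' Y' ≤ 0 := Bf_self_nonpos_of_orth P Y' hPP hoY
  have hCS := Bf_CS P X' Y' hPP hoX hoY
  -- bounds on the defect terms
  have e1 : -Bf X' X' ≤ s ^ 2 := by linarith only [hXX', hcs, sq_nonneg b]
  have e2 : -Bf Y' Y' ≤ s' ^ 2 := by linarith only [hYY', hcs', ha'b', sq_nonneg e']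
  have e3 : 0 ≤ -Bf X' X' := by linarith only [hq1]
  have e4 : 0 ≤ -Bf Y' Y' := by linarith only [hq2]
  have h1 : Bf X' X' * Bf Y' Y' ≤ s ^ 2 * s' ^ 2 := by
    have ht := mul_le_mul e1 e2 e4 (by positivity : (0:ℝ) ≤ s ^ 2)
    calc Bf X' X' * Bf Y' Y' = -Bf X' X' * -Bf Y' Y' := by ring
      _ ≤ s ^ 2 * s' ^ 2 := ht
  have hprod : (Bf X' Y') ^ 2 ≤ (s * s') ^ 2 :=
    calc (Bf X' Y') ^ 2 ≤ Bf X' X' * Bf Y' Y' := hCS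
      _ ≤ s ^ 2 * s' ^ 2 := h1
      _ = (s * s') ^ 2 := by ring
  have hlow : -(s * s') ≤ Bf X' Y' := neg_le_of_sq_le_sq hprod (mul_nonneg hs hs')
  -- put it together
  have hXY : Bf X Y = c * a' - b * b' + Bf X' Y' := by linarith only [hdecomp]
  rw [hXY, ha'eq, hb'eq]
  have t1 : 0 ≤ c * (e' * Real.sinh L) := by positivity
  have t2 : 0 ≤ b * (c' * Real.sinh L) := by
    apply mul_nonneg hb; positivity
  have t3 : 0 ≤ b * (e' * Real.cosh L) := by
    apply mul_nonneg hb; positivity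
  linarith only [hlow, t1, t2, t3]

lemma cosh_le_cosh_of_nonneg {a b : ℝ} (ha : 0 ≤ a) (h : a ≤ b) :
    Real.cosh a ≤ Real.cosh b :=
  Real.cosh_le_cosh.2 (by rw [abs_of_nonneg ha, abs_of_nonneg (le_trans ha h)]; exact h)

lemma cosh_inj_nonneg {a b : ℝ} (ha : 0 ≤ a) (hb : 0 ≤ b)
    (h : Real.cosh a = Real.cosh b) : a = b := by
  have h1 := Real.cosh_le_cosh.1 h.le
  have h2 := Real.cosh_le_cosh.1 h.ge
  rw [abs_of_nonneg ha, abs_of_nonneg hb] at h1 h2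
  linarith

lemma sq_le_sq_imp_le {a b : ℝ} (hb : 0 ≤ b) (h : a ^ 2 ≤ b ^ 2) : a ≤ b := by
  nlinarith [sq_nonneg (a - b), sq_nonneg (a + b)]

set_option maxHeartbeats 1600000 in
lemma geodesic_exists {m : ℕ} (p q : UHS m) (hL : 0 < hdist p q) :
    ∃ (V : E m) (γ : ℝ → UHS m),
      Bf (Phi p) V = 0 ∧ Bf V V = -1 ∧ IsGeodesicSeg γ 0 (hdist p q) ∧
      γ 0 = p ∧ γ (hdist p q) = q ∧
      (∀ s ∈ Icc (0:ℝ) (hdist p q),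
        Phi (γ s) = Real.cosh s • Phi p + Real.sinh s • V) ∧
      Real.cosh (hdist p q) • Phi p + Real.sinh (hdist p q) • V = Phi q := by
  set L : ℝ := hdist p q with hLdef
  set P : E m := Phi p with hPdef
  set Q : E m := Phi q with hQdef
  have hsh : 0 < Real.sinh L := Real.sinh_pos_iff.2 hL
  set V : E m := (Real.sinh L)⁻¹ • (Q - Real.cosh L • P) with hV
  have hPP : Bf P P = 1 := Bf_Phi_self p
  have hQQ : Bf Q Q = 1 := Bf_Phi_self q
  have hPQ : Bf P Q = Real.cosh L := (cosh_hdist p q).symm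
  have hQP : Bf Q P = Real.cosh L := by rw [Bf_comm]; exact hPQ
  have hch : Real.cosh L ^ 2 - Real.sinh L ^ 2 = 1 := Real.cosh_sq_sub_sinh_sq L
  have hPV : Bf P V = 0 := by
    rw [hV, Bf_smul_right, Bf_sub_right, Bf_smul_right, hPQ, hPP]; ring
  have hW : Bf (Q - Real.cosh L • P) (Q - Real.cosh L • P) = -(Real.sinh L) ^ 2 := by
    simp only [Bf_sub_left, Bf_sub_right, Bf_smul_left, Bf_smul_right, hPP, hQQ, hPQ, hQP]
    linear_combination (-1 : ℝ) * hch
  have hVV : Bf V V = -1 := by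
    rw [hV, Bf_smul_left, Bf_smul_right, hW]
    field_simp
  have hVP : Bf V P = 0 := by rw [Bf_comm]; exact hPV
  have hG : ∀ s t : ℝ, Bf (Real.cosh s • P + Real.sinh s • V)
      (Real.cosh t • P + Real.sinh t • V) = Real.cosh (s - t) := by
    intro s t
    simp only [Bf_add_left, Bf_add_right, Bf_smul_left, Bf_smul_right, hPP, hVV, hPV, hVP]
    rw [Real.cosh_sub]; ring
  have hGL : Real.cosh L • P + Real.sinh L • V = Q := by
    rw [hV, smul_smul, mul_inv_cancel₀ hsh.ne', one_smul]; abel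
  have hG0 : Real.cosh 0 • P + Real.sinh 0 • V = P := by
    simp [Real.cosh_zero, Real.sinh_zero]
  -- positivity of the first-minus-last coordinate on [0, L]
  set A : ℝ := P.1 - P.2.2 with hA
  set Bv : ℝ := V.1 - V.2.2 with hBv
  have hA0 : 0 < A := by
    rw [hA, hPdef, Phi_fst_sub]
    have := p.2; positivity
  have hcomp : ∀ s : ℝ, (Real.cosh s • P + Real.sinh s • V).1
      - (Real.cosh s • P + Real.sinh s • V).2.2 = Real.cosh s * A + Real.sinh s * Bv := by
    intro s
    simp only [Prod.fst_add, Prod.snd_add, Prod.smul_fst, Prod.smul_snd, smul_eq_mul,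
      hA, hBv]
    ring
  have hQ0 : 0 < Real.cosh L * A + Real.sinh L * Bv := by
    rw [← hcomp L, hGL, hQdef, Phi_fst_sub]
    have := q.2; positivity
  have hpos : ∀ s ∈ Icc (0:ℝ) L,
      0 < (Real.cosh s • P + Real.sinh s • V).1 - (Real.cosh s • P + Real.sinh s • V).2.2 := by
    intro s hs
    rw [hcomp s]
    have hem1 : Real.exp s ≤ Real.exp L := Real.exp_le_exp.2 hs.2
    have hem2 : Real.exp (-L) ≤ Real.exp (-s) := Real.exp_le_exp.2 (by linarith [hs.2])
    have hem3 : Real.exp (-s) ≤ 1 := Real.exp_le_one_iff.2 (by linarith [hs.1])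
    have hem4 : 1 ≤ Real.exp s := Real.one_le_exp hs.1
    have hep1 : 0 < Real.exp s := Real.exp_pos s
    have hep2 : 0 < Real.exp (-s) := Real.exp_pos (-s)
    rw [Real.cosh_eq, Real.sinh_eq] at hQ0 ⊢
    rcases le_or_gt (A + Bv) 0 with hab | hab
    · have hABv : 0 < A - Bv := by linarith
      nlinarith [mul_le_mul_of_nonpos_left hem1 hab,
        mul_le_mul_of_nonneg_left hem2 hABv.le]
    · rcases le_or_gt 0 (A - Bv) with hab2 | hab2
      · nlinarith [mul_pos hab hep1, mul_nonneg hab2 hep2.le]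
      · nlinarith [mul_le_mul_of_nonneg_left hem4 hab.le,
          mul_le_mul_of_nonpos_left hem3 hab2.le]
  have hBss : ∀ s : ℝ, Bf (Real.cosh s • P + Real.sinh s • V)
      (Real.cosh s • P + Real.sinh s • V) = 1 := by
    intro s; rw [hG s s]; simp
  refine ⟨V, fun s => Psi (Real.cosh s • P + Real.sinh s • V), hPV, hVV, ?_, ?_, ?_, ?_, hGL⟩
  · -- IsGeodesicSeg
    intro s hs t ht
    have hps : Phi (Psi (Real.cosh s • P + Real.sinh s • V)) = Real.cosh s • P + Real.sinh s • V :=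
      Phi_Psi _ (hpos s hs) (hBss s)
    have hpt : Phi (Psi (Real.cosh t • P + Real.sinh t • V)) = Real.cosh t • P + Real.sinh t • V :=
      Phi_Psi _ (hpos t ht) (hBss t)
    have h1 : Real.cosh (hdist (Psi (Real.cosh s • P + Real.sinh s • V))
        (Psi (Real.cosh t • P + Real.sinh t • V))) = Real.cosh |s - t| := by
      rw [cosh_hdist, hps, hpt, hG, Real.cosh_abs]
    exact cosh_inj_nonneg (hdist_nonneg _ _) (abs_nonneg _) h1
  · show Psi (Real.cosh 0 • P + Real.sinh 0 • V) = p
    rw [hG0, hPdef, Psi_Phi]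
  · show Psi (Real.cosh L • P + Real.sinh L • V) = q
    rw [hGL, hQdef, Psi_Phi]
  · intro s hs
    exact Phi_Psi _ (hpos s hs) (hBss s)

end ProjAux

set_option maxHeartbeats 1600000

/-- **Lemma A1.1.** The nearest-point projection onto a closed convex subset `C`
of hyperbolic space contracts the local metric at a point `x` at distance `d`
from `C` by at least a factor `cosh d` (and `cosh d ≥ e^d / 2`). -/
theorem projection_contracts_local_metric {m : ℕ} (C : Set (UHS m))
    (hCcl : IsClosed C) (hCconv : HConvex C) (hCne : C.Nonempty)
    (σ : UHS m → UHS m)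
    (hσ : ∀ z : UHS m, σ z ∈ C ∧ ∀ c ∈ C, hdist z (σ z) ≤ hdist z c)
    (x : UHS m) (d : ℝ) (hd : hdist x (σ x) = d) :
    Real.exp d / 2 ≤ Real.cosh d ∧
    ∀ ε > (0 : ℝ), ∃ r > (0 : ℝ), ∀ y : UHS m, hdist x y < r →
      Real.cosh d * hdist (σ x) (σ y) ≤ (1 + ε) * hdist x y := by
  have hd0 : 0 ≤ d := hd ▸ ProjAux.hdist_nonneg x (σ x)
  constructor
  · rw [Real.cosh_eq]
    have h0 := Real.exp_pos (-d)
    linarith only [h0]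
  intro ε hε
  refine ⟨Real.log (1 + ε), Real.log_pos (by linarith only [hε]), ?_⟩
  intro y hy
  obtain ⟨hpC, hpmin⟩ := hσ x
  obtain ⟨hqC, hqmin⟩ := hσ y
  set p : UHS m := σ x with hp
  set q : UHS m := σ y with hq
  set δ : ℝ := hdist x y with hδ
  have hδ0 : 0 ≤ δ := ProjAux.hdist_nonneg x y
  set L : ℝ := hdist p q with hLd
  have hL0 : 0 ≤ L := ProjAux.hdist_nonneg p q
  have hexpδ : Real.exp δ ≤ 1 + ε := by
    have h := Real.exp_lt_exp.2 hy
    rw [Real.exp_log (by linarith only [hε] : (0:ℝ) < 1 + ε)] at h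
    exact h.le
  show Real.cosh d * L ≤ (1 + ε) * δ
  rcases eq_or_lt_of_le hL0 with hL | hL
  · rw [← hL, mul_zero]
    exact mul_nonneg (by linarith only [hε]) hδ0
  obtain ⟨V, γ, hPV, hVV, hgeo, hγ0, hγL, hγPhi, hQeq⟩ := ProjAux.geodesic_exists p q hL
  have hsub : ∀ t ∈ Icc (0:ℝ) L, γ t ∈ C :=
    hCconv p hpC q hqC γ 0 L hL0 hgeo hγ0 hγL
  set X : ProjAux.E m := ProjAux.Phi x with hX
  set Y : ProjAux.E m := ProjAux.Phi y with hYe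
  set P : ProjAux.E m := ProjAux.Phi p with hPe
  set Q : ProjAux.E m := ProjAux.Phi q with hQe
  set d' : ℝ := hdist y q with hd'
  have hd'0 : 0 ≤ d' := ProjAux.hdist_nonneg y q
  have hXX : ProjAux.Bf X X = 1 := ProjAux.Bf_Phi_self x
  have hYY : ProjAux.Bf Y Y = 1 := ProjAux.Bf_Phi_self y
  have hPP : ProjAux.Bf P P = 1 := ProjAux.Bf_Phi_self p
  have hQQ : ProjAux.Bf Q Q = 1 := ProjAux.Bf_Phi_self q
  have hXP : ProjAux.Bf X P = Real.cosh d := by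
    rw [hX, hPe, ← ProjAux.cosh_hdist, hd]
  -- first variation at p
  have hfirst : ∀ s ∈ Icc (0:ℝ) L,
      Real.cosh d ≤ Real.cosh d * Real.cosh s + ProjAux.Bf X V * Real.sinh s := by
    intro s hs
    have hge : d ≤ hdist x (γ s) := by rw [← hd]; exact hpmin _ (hsub s hs)
    have h2 : Real.cosh d ≤ Real.cosh (hdist x (γ s)) :=
      ProjAux.cosh_le_cosh_of_nonneg hd0 hge
    rw [ProjAux.cosh_hdist x (γ s), hγPhi s hs, ProjAux.Bf_add_right,
      ProjAux.Bf_smul_right, ProjAux.Bf_smul_right, hXP] at h2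
    linarith only [h2]
  have hb : 0 ≤ ProjAux.Bf X V :=
    ProjAux.first_variation (Real.one_le_cosh d) hL hfirst
  -- first variation at q
  have hYQc : ProjAux.Bf Y Q = Real.cosh d' := by
    rw [hYe, hQe, ← ProjAux.cosh_hdist]
  have hYQ' : ProjAux.Bf Y P * Real.cosh L + ProjAux.Bf Y V * Real.sinh L = Real.cosh d' := by
    rw [← hYQc, ← hQeq, ProjAux.Bf_add_right, ProjAux.Bf_smul_right, ProjAux.Bf_smul_right]
    ring
  have hsecond : ∀ u ∈ Icc (0:ℝ) L, Real.cosh d' ≤ Real.cosh d' * Real.cosh u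
      + (-(ProjAux.Bf Y P * Real.sinh L + ProjAux.Bf Y V * Real.cosh L)) * Real.sinh u := by
    intro u hu
    have hmem : γ (L - u) ∈ C := hsub _ ⟨by linarith only [hu.2], by linarith only [hu.1]⟩
    have hge : d' ≤ hdist y (γ (L - u)) := hqmin _ hmem
    have h2 : Real.cosh d' ≤ Real.cosh (hdist y (γ (L - u))) :=
      ProjAux.cosh_le_cosh_of_nonneg hd'0 hge
    rw [ProjAux.cosh_hdist y (γ (L - u)),
      hγPhi (L - u) ⟨by linarith only [hu.2], by linarith only [hu.1]⟩, ProjAux.Bf_add_right,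
      ProjAux.Bf_smul_right, ProjAux.Bf_smul_right, Real.cosh_sub, Real.sinh_sub] at h2
    rw [← hYQ'] at h2 ⊢
    linarith only [h2]
  have he2 : 0 ≤ -(ProjAux.Bf Y P * Real.sinh L + ProjAux.Bf Y V * Real.cosh L) :=
    ProjAux.first_variation (Real.one_le_cosh d') hL hsecond
  have he : ProjAux.Bf Y P * Real.sinh L + ProjAux.Bf Y V * Real.cosh L ≤ 0 := by linarith only [he2]
  -- quadrilateral comparison
  have hquad := ProjAux.quad P V X Y L (Real.cosh d) (Real.cosh d') (Real.sinh d)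
    (Real.sinh d') hPP hVV hPV hXX hYY hL0 (Real.one_le_cosh d) (Real.one_le_cosh d')
    hXP hb hYQ' he (Real.sinh_nonneg_iff.2 hd0) (Real.sinh_nonneg_iff.2 hd'0)
    (Real.cosh_sq' d) (Real.cosh_sq' d')
  have hBXY : ProjAux.Bf X Y = Real.cosh δ := by
    rw [hX, hYe, ← ProjAux.cosh_hdist]
  have hquad' : Real.cosh d * Real.cosh d' * Real.cosh L
      - Real.sinh d * Real.sinh d' ≤ Real.cosh δ := by
    rw [← hBXY]; exact hquad
  -- triangle inequality through y
  have hδs : 0 ≤ Real.sinh δ := Real.sinh_nonneg_iff.2 hδ0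
  have hd's : 0 ≤ Real.sinh d' := Real.sinh_nonneg_iff.2 hd'0
  have htri : ProjAux.Bf X Q ≤ Real.cosh δ * Real.cosh d' + Real.sinh δ * Real.sinh d' := by
    have h := ProjAux.Bf_le_of_mid X Y Q hXX hYY hQQ (Real.sinh δ) (Real.sinh d') hδs hd's
      (by rw [hBXY]; exact Real.cosh_sq' δ) (by rw [hYQc]; exact Real.cosh_sq' d')
    rwa [hBXY, hYQc] at h
  have hcle : Real.cosh d ≤ ProjAux.Bf X Q := by
    have hge : d ≤ hdist x q := by rw [← hd]; exact hpmin q hqC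
    have h2 := ProjAux.cosh_le_cosh_of_nonneg hd0 hge
    rwa [ProjAux.cosh_hdist x q] at h2
  have hss' : Real.sinh d' ≤ Real.cosh d' := by
    have h1 := Real.cosh_sub_sinh d'
    have h2 := Real.exp_pos (-d')
    linarith only [h1, h2]
  have hG2 : Real.cosh d ≤ Real.exp δ * Real.cosh d' := by
    have h1 : Real.sinh δ * Real.sinh d' ≤ Real.sinh δ * Real.cosh d' :=
      mul_le_mul_of_nonneg_left hss' hδs
    have h2 := Real.cosh_add_sinh δ
    have h3 : (Real.cosh δ + Real.sinh δ) * Real.cosh d' = Real.exp δ * Real.cosh d' := by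
      rw [h2]
    linarith only [htri, hcle, h1, h3]
  -- endgame
  have hG3 : 1 ≤ Real.cosh d * Real.cosh d' - Real.sinh d * Real.sinh d' := by
    rw [← Real.cosh_sub]; exact Real.one_le_cosh _
  have hstep1 : Real.cosh d * Real.cosh d' * (Real.cosh L - 1) ≤ Real.cosh δ - 1 := by
    linarith only [hquad', hG3]
  have hstep2 : Real.cosh d * Real.cosh d' * (2 * Real.sinh (L / 2) ^ 2)
      ≤ 2 * Real.sinh (δ / 2) ^ 2 := by
    rw [← ProjAux.cosh_sub_one_eq L, ← ProjAux.cosh_sub_one_eq δ]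
    exact hstep1
  have hc0 : (0:ℝ) ≤ Real.cosh d := (Real.cosh_pos d).le
  have hc'0 : (0:ℝ) ≤ Real.cosh d' := (Real.cosh_pos d').le
  set Sd : ℝ := Real.sinh (δ / 2) with hSd
  set SL : ℝ := Real.sinh (L / 2) with hSL
  set Ed : ℝ := Real.exp (δ / 2) with hEd
  have hSd0 : 0 ≤ Sd := Real.sinh_nonneg_iff.2 (by linarith only [hδ0])
  have hSL0 : 0 ≤ SL := Real.sinh_nonneg_iff.2 (by linarith only [hL0])
  have hf2 : Sd ≤ (δ / 2) * Ed := ProjAux.sinh_le_mul_exp (by linarith only [hδ0])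
  have hf3 : L / 2 ≤ SL := (Real.self_lt_sinh_iff.2 (by linarith only [hL])).le
  have hf4 : Ed * Ed = Real.exp δ := by rw [hEd, ← Real.exp_add]; ring_nf
  have hf1 : Real.cosh d * Real.cosh d' * SL ^ 2 ≤ Sd ^ 2 := by linarith only [hstep2]
  have hg1 : Real.cosh d * Real.cosh d * SL ^ 2
      ≤ (Ed * Ed) * (Real.cosh d * Real.cosh d' * SL ^ 2) := by
    have h5 : Real.cosh d ≤ (Ed * Ed) * Real.cosh d' := by rw [hf4]; exact hG2
    have h6 := mul_le_mul_of_nonneg_right h5 (mul_nonneg hc0 (sq_nonneg SL))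
    linarith only [h6]
  have hg2 : (Ed * Ed) * (Real.cosh d * Real.cosh d' * SL ^ 2) ≤ (Ed * Ed) * Sd ^ 2 :=
    mul_le_mul_of_nonneg_left hf1 (by positivity)
  have hg3 : Sd ^ 2 ≤ (δ / 2) ^ 2 * (Ed * Ed) := by
    have h7 := pow_le_pow_left₀ hSd0 hf2 2
    calc Sd ^ 2 ≤ ((δ / 2) * Ed) ^ 2 := h7
      _ = (δ / 2) ^ 2 * (Ed * Ed) := by ring
  have hg4 : (Ed * Ed) * Sd ^ 2 ≤ (Ed * Ed) * ((δ / 2) ^ 2 * (Ed * Ed)) :=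
    mul_le_mul_of_nonneg_left hg3 (by positivity)
  have hkey : (Real.cosh d * (L / 2)) ^ 2 ≤ ((δ / 2) * (Ed * Ed)) ^ 2 := by
    have h6 : Real.cosh d * (L / 2) ≤ Real.cosh d * SL := mul_le_mul_of_nonneg_left hf3 hc0
    have h7 : 0 ≤ Real.cosh d * (L / 2) := mul_nonneg hc0 (by linarith only [hL0])
    have h8 := pow_le_pow_left₀ h7 h6 2
    calc (Real.cosh d * (L / 2)) ^ 2 ≤ (Real.cosh d * SL) ^ 2 := h8
      _ = Real.cosh d * Real.cosh d * SL ^ 2 := by ring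
      _ ≤ (Ed * Ed) * (Real.cosh d * Real.cosh d' * SL ^ 2) := hg1
      _ ≤ (Ed * Ed) * Sd ^ 2 := hg2
      _ ≤ (Ed * Ed) * ((δ / 2) ^ 2 * (Ed * Ed)) := hg4
      _ = ((δ / 2) * (Ed * Ed)) ^ 2 := by ring
  have hfin : Real.cosh d * (L / 2) ≤ (δ / 2) * (Ed * Ed) :=
    ProjAux.sq_le_sq_imp_le (by positivity) hkey
  rw [hf4] at hfin
  have hlast : (δ / 2) * Real.exp δ ≤ (δ / 2) * (1 + ε) :=
    mul_le_mul_of_nonneg_left hexpδ (by linarith only [hδ0])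
  linarith only [hfin, hlast]
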